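/- Let n, k, s, t be positive integers with k ≤ n. For every monotone s-CNF f on the variable set K([n]) and every monotone restriction R ⊆ K([n]), there exists a monotone t-DNF g on K([n]) such that g_R ≤ f_R (pointwise on subsets of K([n]) \ R) and |Z_R(f) \ Z_R(g)| ≤ binom(n,k) · (s·k/n)^{√(t/2)}. -/

import Mathlib

/-- Edges of the complete graph on `[n] = Fin n`: non-diagonal unordered pairs.
This is the variable set `K([n])`. -/
abbrev Edge (n : ℕ) := {e : Sym2 (Fin n) // ¬ e.IsDiag}

/-- `KE A` is the set of edges with both endpoints in `A`, i.e. `K(A)`. -/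
def KE {n : ℕ} (A : Finset (Fin n)) : Finset (Edge n) :=
  Finset.univ.filter (fun e => e.1 ∈ A.sym2)

/-- Evaluation of the monotone CNF with set of clauses `C` on input `G`:
every clause must contain a true variable. -/
def cnfEval {α : Type} [DecidableEq α] (C : Finset (Finset α)) (G : Finset α) : Prop :=
  ∀ q ∈ C, (q ∩ G).Nonempty

/-- Evaluation of the monotone DNF with set of terms `D` on input `G`:
some term must have all its variables true. -/
def dnfEval {α : Type} (D : Finset (Finset α)) (G : Finset α) : Prop :=
  ∃ q ∈ D, q ⊆ G

open Classical in
/-- `ZR k F R` is `Z_R(F)`: the set of `k`-element vertex sets `A ⊆ [n]` such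
that `F(K(A) ∪ R) = 1`, i.e. the cliques forcing `F` to true under the
monotone restriction fixing the variables in `R` to true. -/
noncomputable def ZR {n : ℕ} (k : ℕ) (F : Finset (Edge n) → Prop)
    (R : Finset (Edge n)) : Finset (Finset (Fin n)) :=
  Finset.univ.filter (fun A => A.card = k ∧ F (KE A ∪ R))

lemma myChoose_pred_pred_le {a b : ℕ} (h : b ≤ a) : (a-1).choose (b-1) ≤ a.choose b := by
  match b with
  | 0 => simp
  | b+1 =>
    obtain ⟨a', rfl⟩ : ∃ a', a = a' + 1 := ⟨a - 1, by omega⟩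
    simpa [Nat.choose_succ_succ] using Nat.le_add_right _ _

lemma myChoose_sub_sub_le (i : ℕ) {a b : ℕ} (h : b ≤ a) :
    (a - i).choose (b - i) ≤ a.choose b := by
  induction i with
  | zero => simp
  | succ i ih =>
    have h1 : a - (i+1) = (a - i) - 1 := by omega
    have h2 : b - (i+1) = (b - i) - 1 := by omega
    rw [h1, h2]
    exact (myChoose_pred_pred_le (Nat.sub_le_sub_right h i)).trans ih

lemma myDesc_ineq {k n : ℕ} (h : k ≤ n) : ∀ c, k.descFactorial c * n^c ≤ n.descFactorial c * k^c
  | 0 => by simp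
  | c+1 => by
    have key : (k - c) * n ≤ (n - c) * k := by
      rw [Nat.sub_mul, Nat.sub_mul]
      have h1 : c * k ≤ c * n := Nat.mul_le_mul_left c h
      have h2 : k * n = n * k := Nat.mul_comm k n
      omega
    calc k.descFactorial (c+1) * n^(c+1)
        = ((k - c) * n) * (k.descFactorial c * n^c) := by
          rw [Nat.descFactorial_succ, pow_succ]; ring
      _ ≤ ((n - c) * k) * (n.descFactorial c * k^c) :=
          Nat.mul_le_mul key (myDesc_ineq h c)
      _ = n.descFactorial (c+1) * k^(c+1) := by
          rw [Nat.descFactorial_succ, pow_succ]; ring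

lemma myChoose_pow_ineq {k n : ℕ} (h : k ≤ n) (c : ℕ) :
    k.choose c * n^c ≤ n.choose c * k^c := by
  have H := myDesc_ineq h c
  rw [Nat.descFactorial_eq_factorial_mul_choose, Nat.descFactorial_eq_factorial_mul_choose] at H
  have H2 : (Nat.factorial c) * (k.choose c * n^c) ≤ (Nat.factorial c) * (n.choose c * k^c) := by
    calc (Nat.factorial c) * (k.choose c * n^c) = Nat.factorial c * k.choose c * n^c := by ring
      _ ≤ Nat.factorial c * n.choose c * k^c := H
      _ = Nat.factorial c * (n.choose c * k^c) := by ring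
  exact Nat.le_of_mul_le_mul_left H2 (Nat.factorial_pos c)

lemma myMul_le {c t : ℕ} (hc : 1 ≤ c) (h : 2*(c-1)^2 < t) : (c+1)*c ≤ 2*t := by
  obtain ⟨d, rfl⟩ : ∃ d, c = d + 1 := ⟨c - 1, by omega⟩
  simp only [Nat.add_sub_cancel] at h
  nlinarith [Nat.le_self_pow (two_ne_zero) d]

lemma myCeil_facts {t c : ℕ} (ht : 0 < t) (hc : c = ⌈Real.sqrt ((t:ℝ)/2)⌉₊) :
    1 ≤ c ∧ (c+1).choose 2 ≤ t := by
  have ht2 : (0:ℝ) < (t:ℝ)/2 := by positivity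
  have hc1 : 1 ≤ c := by
    have : 0 < c := hc ▸ Nat.ceil_pos.mpr (Real.sqrt_pos.mpr ht2)
    omega
  refine ⟨hc1, ?_⟩
  have hlt : ((c - 1 : ℕ) : ℝ) < Real.sqrt ((t:ℝ)/2) := by
    rw [← Nat.lt_ceil, ← hc]; omega
  have hsq : ((c - 1 : ℕ) : ℝ)^2 < (t:ℝ)/2 := (Real.lt_sqrt (by positivity)).mp hlt
  have hnat : 2 * (c-1)^2 < t := by
    have : ((2 * (c-1)^2 : ℕ) : ℝ) < (t:ℝ) := by push_cast; nlinarith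
    exact_mod_cast this
  have hmul := myMul_le hc1 hnat
  calc (c+1).choose 2 = (c+1) * c / 2 := by rw [Nat.choose_two_right]; simp
    _ ≤ 2 * t / 2 := Nat.div_le_div_right hmul
    _ = t := by omega



open Finset

variable {n : ℕ}

noncomputable def everts (e : Edge n) : Finset (Fin n) :=
  Finset.univ.filter (fun v => v ∈ e.1)

lemma mem_everts {e : Edge n} {v : Fin n} : v ∈ everts e ↔ v ∈ e.1 := by
  classical simp [everts]

lemma everts_eq (a b : Fin n) (h : ¬ (s(a,b) : Sym2 (Fin n)).IsDiag) :
    everts ⟨s(a,b), h⟩ = {a, b} := by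
  ext v; simp [mem_everts, Sym2.mem_iff]

lemma everts_subset_iff {e : Edge n} {A : Finset (Fin n)} :
    everts e ⊆ A ↔ e.1 ∈ A.sym2 := by
  obtain ⟨z, hz⟩ := e
  induction z using Sym2.ind with
  | _ a b =>
    rw [everts_eq a b hz]
    simp [Finset.mk_mem_sym2_iff, Finset.insert_subset_iff]

lemma everts_injective : Function.Injective (everts (n := n)) := by
  rintro ⟨z, hz⟩ ⟨w, hw⟩ h
  induction z using Sym2.ind with
  | _ a b =>
    induction w using Sym2.ind with
    | _ c d =>
      rw [everts_eq a b hz, everts_eq c d hw] at h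
      apply Subtype.ext
      simp only [Sym2.mk_isDiag_iff] at hz hw
      have hac : a ∈ ({c, d} : Finset (Fin n)) := h ▸ (by simp)
      have hbc : b ∈ ({c, d} : Finset (Fin n)) := h ▸ (by simp)
      have hca : c ∈ ({a, b} : Finset (Fin n)) := h ▸ (by simp)
      have hda : d ∈ ({a, b} : Finset (Fin n)) := h ▸ (by simp)
      simp only [Finset.mem_insert, Finset.mem_singleton] at hac hbc hca hda
      simp only [Sym2.eq_iff]
      tauto

lemma card_everts (e : Edge n) : (everts e).card = 2 := by
  obtain ⟨z, hz⟩ := e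
  induction z using Sym2.ind with
  | _ a b =>
    rw [everts_eq a b hz]
    exact Finset.card_pair (by simpa using hz)

lemma mem_KE {e : Edge n} {A : Finset (Fin n)} : e ∈ KE A ↔ everts e ⊆ A := by
  simp [KE, everts_subset_iff]

lemma KE_mono {A B : Finset (Fin n)} (h : A ⊆ B) : KE A ⊆ KE B := by
  intro e he
  rw [mem_KE] at he ⊢
  exact he.trans h

lemma card_KE_le (B : Finset (Fin n)) : (KE B).card ≤ B.card.choose 2 := by
  classical
  have : (KE B).card ≤ (B.powersetCard 2).card := by
    apply Finset.card_le_card_of_injOn everts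
    · intro e he
      rw [Finset.mem_coe, Finset.mem_powersetCard]
      exact ⟨mem_KE.mp he, card_everts e⟩
    · exact fun x _ y _ h => everts_injective h
  simpa [Finset.card_powersetCard] using this

lemma card_superset_le (V : Finset (Fin n)) (k : ℕ) (S : Finset (Finset (Fin n)))
    (hS : ∀ A ∈ S, A.card = k ∧ V ⊆ A) :
    S.card ≤ (n - V.card).choose (k - V.card) := by
  classical
  have : S.card ≤ ((Vᶜ).powersetCard (k - V.card)).card := by
    apply Finset.card_le_card_of_injOn (fun A => A \ V)
    · intro A hA
      obtain ⟨hAc, hVA⟩ := hS A hA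
      rw [Finset.mem_coe, Finset.mem_powersetCard]
      constructor
      · intro x hx
        rw [Finset.mem_sdiff] at hx
        simpa using hx.2
      · rw [Finset.card_sdiff_of_subset hVA, hAc]
    · intro A hA B hB h
      obtain ⟨_, hVA⟩ := hS A (Finset.mem_coe.mp hA)
      obtain ⟨_, hVB⟩ := hS B (Finset.mem_coe.mp hB)
      have h' : A \ V = B \ V := h
      have : A \ V ∪ V = B \ V ∪ V := by rw [h']
      rwa [Finset.sdiff_union_of_subset hVA, Finset.sdiff_union_of_subset hVB] at this
  simpa [Finset.card_powersetCard, Finset.card_compl] using this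


open Classical in
noncomputable def badSet (k w : ℕ) (C : Finset (Finset (Edge n))) (R : Finset (Edge n))
    (V : Finset (Fin n)) : Finset (Finset (Fin n)) :=
  Finset.univ.filter (fun A => A.card = k ∧ V ⊆ A ∧ cnfEval C (KE A ∪ R) ∧
    ∀ B ⊆ A, B.card ≤ w → ¬ cnfEval C (KE B ∪ R))

lemma mem_badSet {k w : ℕ} {C : Finset (Finset (Edge n))} {R : Finset (Edge n)}
    {V A : Finset (Fin n)} :
    A ∈ badSet k w C R V ↔ (A.card = k ∧ V ⊆ A ∧ cnfEval C (KE A ∪ R) ∧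
      ∀ B ⊆ A, B.card ≤ w → ¬ cnfEval C (KE B ∪ R)) := by
  simp [badSet]

lemma badSet_card_of_ge {k w c : ℕ} {C : Finset (Finset (Edge n))} {R : Finset (Edge n)}
    {V : Finset (Fin n)} (hkn : k ≤ n) (hVc : c ≤ V.card) :
    (badSet k w C R V).card ≤ (n - c).choose (k - c) := by
  have h1 : (badSet k w C R V).card ≤ (n - V.card).choose (k - V.card) := by
    apply card_superset_le
    intro A hA
    rw [mem_badSet] at hA
    exact ⟨hA.1, hA.2.1⟩
  refine h1.trans ?_
  have e1 : n - V.card = (n - c) - (V.card - c) := by omega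
  have e2 : k - V.card = (k - c) - (V.card - c) := by omega
  rw [e1, e2]
  exact myChoose_sub_sub_le _ (by omega)

lemma badSet_card {k s : ℕ} {C : Finset (Finset (Edge n))} {R : Finset (Edge n)}
    (hkn : k ≤ n) (hs : 1 ≤ s) (hC : ∀ q ∈ C, q.card ≤ s) (c : ℕ) :
    ∀ d (V : Finset (Fin n)), c ≤ V.card + d →
      (badSet k (c+1) C R V).card ≤ s^d * (n - c).choose (k - c) := by
  intro d
  induction d with
  | zero =>
    intro V hV
    simpa using badSet_card_of_ge hkn (by omega)
  | succ d ih =>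
    intro V hV
    by_cases hVc : c ≤ V.card
    · calc (badSet k (c+1) C R V).card ≤ (n - c).choose (k - c) :=
            badSet_card_of_ge hkn hVc
        _ ≤ s^(d+1) * (n - c).choose (k - c) :=
            Nat.le_mul_of_pos_left _ (pow_pos hs _)
    · by_cases hne : (badSet k (c+1) C R V).Nonempty
      swap
      · rw [Finset.not_nonempty_iff_eq_empty] at hne
        simp [hne]
      obtain ⟨A₀, hA₀⟩ := hne
      rw [mem_badSet] at hA₀
      obtain ⟨hA₀c, hVA₀, hcnf₀, hbad₀⟩ := hA₀
      have hnotcnf : ¬ cnfEval C (KE V ∪ R) := by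
        apply hbad₀ V hVA₀
        omega
      rw [cnfEval] at hnotcnf
      push_neg at hnotcnf
      obtain ⟨q, hqC, hqe⟩ := hnotcnf
      -- every e ∈ q is not in KE V ∪ R
      have hqout : ∀ e ∈ q, e ∉ KE V ∪ R := by
        intro e he hmem
        have : e ∈ q ∩ (KE V ∪ R) := Finset.mem_inter.mpr ⟨he, hmem⟩
        rw [hqe] at this
        exact Finset.notMem_empty _ this
      have hsub : badSet k (c+1) C R V ⊆
          q.biUnion (fun e => badSet k (c+1) C R (V ∪ everts e)) := by
        intro A hA
        rw [mem_badSet] at hA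
        obtain ⟨hAc, hVA, hcnfA, hbadA⟩ := hA
        obtain ⟨e, he⟩ := hcnfA q hqC
        rw [Finset.mem_inter] at he
        obtain ⟨heq, heA⟩ := he
        have heKA : e ∈ KE A := by
          rcases Finset.mem_union.mp heA with h | h
          · exact h
          · exact absurd (Finset.mem_union_right _ h) (hqout e heq)
        rw [Finset.mem_biUnion]
        refine ⟨e, heq, ?_⟩
        rw [mem_badSet]
        exact ⟨hAc, Finset.union_subset hVA (mem_KE.mp heKA), hcnfA, hbadA⟩
      calc (badSet k (c+1) C R V).card
          ≤ (q.biUnion (fun e => badSet k (c+1) C R (V ∪ everts e))).card :=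
            Finset.card_le_card hsub
        _ ≤ ∑ e ∈ q, (badSet k (c+1) C R (V ∪ everts e)).card :=
            Finset.card_biUnion_le
        _ ≤ q.card * (s^d * (n - c).choose (k - c)) := by
            apply Finset.sum_le_card_nsmul
            intro e he
            apply ih
            -- card of V ∪ everts e ≥ V.card + 1
            have heKV : e ∉ KE V := fun h => hqout e he (Finset.mem_union_left _ h)
            rw [mem_KE] at heKV
            obtain ⟨v, hv, hvV⟩ := Finset.not_subset.mp heKV
            have : insert v V ⊆ V ∪ everts e := by
              intro x hx
              rcases Finset.mem_insert.mp hx with rfl | hx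
              · exact Finset.mem_union_right _ hv
              · exact Finset.mem_union_left _ hx
            have h2 : V.card + 1 ≤ (V ∪ everts e).card := by
              have := Finset.card_le_card this
              rwa [Finset.card_insert_of_notMem hvV] at this
            omega
        _ ≤ s * (s^d * (n - c).choose (k - c)) :=
            Nat.mul_le_mul_right _ (hC q hqC)
        _ = s^(d+1) * (n - c).choose (k - c) := by ring




/-- CNF to DNF switching with small clique error: for every monotone `s`-CNF
`f` on `K([n])` and monotone restriction `R`, there is a monotone `t`-DNF `g`
with `g_R ≤ f_R` and `|Z_R(f) \ Z_R(g)| ≤ C(n,k) (s k / n)^√(t/2)`. -/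
theorem cnf_to_dnf_switching_small_clique_error
    (n k s t : ℕ) (hn : 0 < n) (hk : 0 < k) (hs : 0 < s) (ht : 0 < t)
    (hkn : k ≤ n)
    (C : Finset (Finset (Edge n))) (hC : ∀ q ∈ C, q.card ≤ s)
    (R : Finset (Edge n)) :
    ∃ D : Finset (Finset (Edge n)),
      (∀ q ∈ D, q.card ≤ t) ∧
      (∀ G : Finset (Edge n), G ⊆ Rᶜ → dnfEval D (G ∪ R) → cnfEval C (G ∪ R)) ∧
      ((ZR k (cnfEval C) R \ ZR k (dnfEval D) R).card : ℝ) ≤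
        (Nat.choose n k : ℝ) * (((s : ℝ) * k / n) ^ (Real.sqrt ((t : ℝ) / 2))) := by
  classical
  set ε := Real.sqrt ((t:ℝ)/2) with hedef
  set c := ⌈ε⌉₊ with hcdef
  obtain ⟨hc1, hct⟩ := myCeil_facts (t := t) (c := c) ht rfl
  have hce : ε ≤ (c:ℝ) := Nat.le_ceil ε
  by_cases hsk : n ≤ s * k
  · -- trivial case: the base is ≥ 1
    refine ⟨∅, by simp, ?_, ?_⟩
    · intro G _ hdnf
      rcases hdnf with ⟨q, hq, _⟩
      simp at hq
    · have h1 : (ZR k (cnfEval C) R \ ZR k (dnfEval (∅ : Finset (Finset (Edge n)))) R).card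
          ≤ n.choose k := by
        calc (ZR k (cnfEval C) R \ ZR k (dnfEval ∅) R).card
            ≤ (ZR k (cnfEval C) R).card := Finset.card_le_card Finset.sdiff_subset
          _ ≤ (Finset.powersetCard k (Finset.univ : Finset (Fin n))).card := by
              apply Finset.card_le_card
              intro A hA
              simp only [ZR, Finset.mem_filter] at hA
              exact Finset.mem_powersetCard_univ.mpr hA.2.1
          _ = n.choose k := by simp
      have hρ : (1:ℝ) ≤ (s:ℝ) * k / n := by
        rw [le_div_iff₀ (by exact_mod_cast hn)]
        rw [one_mul]
        exact_mod_cast hsk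
      calc ((ZR k (cnfEval C) R \ ZR k (dnfEval ∅) R).card : ℝ)
          ≤ (n.choose k : ℝ) := by exact_mod_cast h1
        _ = (n.choose k : ℝ) * 1 := (mul_one _).symm
        _ ≤ (n.choose k : ℝ) * ((s:ℝ) * k / n) ^ ε := by
            apply mul_le_mul_of_nonneg_left _ (by positivity)
            exact Real.one_le_rpow hρ (hedef ▸ Real.sqrt_nonneg _)
  · push_neg at hsk
    set D := (Finset.univ.filter
        (fun B : Finset (Fin n) => B.card ≤ min (c+1) k ∧ cnfEval C (KE B ∪ R))).image
        (fun B => KE B \ R) with hDdef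
    refine ⟨D, ?_, ?_, ?_⟩
    · -- term sizes
      intro qq hqq
      rw [hDdef, Finset.mem_image] at hqq
      obtain ⟨B, hB, rfl⟩ := hqq
      rw [Finset.mem_filter] at hB
      calc (KE B \ R).card ≤ (KE B).card := Finset.card_le_card Finset.sdiff_subset
        _ ≤ B.card.choose 2 := card_KE_le B
        _ ≤ (c+1).choose 2 := Nat.choose_le_choose 2 (hB.2.1.trans (min_le_left _ _))
        _ ≤ t := hct
    · -- soundness
      intro G _ hdnf
      obtain ⟨qq, hqq, hsubG⟩ := hdnf
      rw [hDdef, Finset.mem_image] at hqq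
      obtain ⟨B, hB, rfl⟩ := hqq
      rw [Finset.mem_filter] at hB
      intro q' hq'
      obtain ⟨e, he⟩ := hB.2.2 q' hq'
      rw [Finset.mem_inter] at he
      refine ⟨e, Finset.mem_inter.mpr ⟨he.1, ?_⟩⟩
      rcases Finset.mem_union.mp he.2 with h | h
      · by_cases heR : e ∈ R
        · exact Finset.mem_union_right _ heR
        · exact hsubG (Finset.mem_sdiff.mpr ⟨h, heR⟩)
      · exact Finset.mem_union_right _ h
    · -- the error bound
      by_cases hkc : k ≤ c + 1
      · -- no error at all
        have hempty : ZR k (cnfEval C) R \ ZR k (dnfEval D) R = ∅ := by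
          rw [Finset.sdiff_eq_empty_iff_subset]
          intro A hA
          simp only [ZR, Finset.mem_filter, Finset.mem_univ, true_and] at hA ⊢
          obtain ⟨hAc, hcnfA⟩ := hA
          refine ⟨hAc, ⟨KE A \ R, ?_, ?_⟩⟩
          · rw [hDdef, Finset.mem_image]
            refine ⟨A, Finset.mem_filter.mpr ⟨Finset.mem_univ _, ?_, hcnfA⟩, rfl⟩
            rw [hAc]
            exact le_min hkc le_rfl
          · intro x hx
            exact Finset.mem_union_left _ (Finset.mem_sdiff.mp hx).1
        rw [hempty]
        simp only [Finset.card_empty, Nat.cast_zero]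
        positivity
      · push_neg at hkc
        have hck : c ≤ k := by omega
        have hBadsub : ZR k (cnfEval C) R \ ZR k (dnfEval D) R ⊆ badSet k (c+1) C R ∅ := by
          intro A hA
          rw [Finset.mem_sdiff] at hA
          obtain ⟨hAf, hAg⟩ := hA
          simp only [ZR, Finset.mem_filter, Finset.mem_univ, true_and] at hAf hAg
          rw [mem_badSet]
          refine ⟨hAf.1, Finset.empty_subset _, hAf.2, ?_⟩
          intro B hBA hBc hcnfB
          apply hAg
          refine ⟨hAf.1, ⟨KE B \ R, ?_, ?_⟩⟩
          · rw [hDdef, Finset.mem_image]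
            refine ⟨B, Finset.mem_filter.mpr ⟨Finset.mem_univ _, ?_, hcnfB⟩, rfl⟩
            have hBk : B.card ≤ k := hAf.1 ▸ Finset.card_le_card hBA
            exact le_min hBc hBk
          · intro x hx
            exact Finset.mem_union_left _ (KE_mono hBA (Finset.mem_sdiff.mp hx).1)
        have hcount : (ZR k (cnfEval C) R \ ZR k (dnfEval D) R).card
            ≤ s^c * (n-c).choose (k-c) :=
          (Finset.card_le_card hBadsub).trans (badSet_card hkn hs hC c c ∅ (by simp))
        have hn0 : (0:ℝ) < n := by exact_mod_cast hn
        have hρpos : (0:ℝ) < (s:ℝ) * k / n := by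
          apply div_pos _ hn0
          have : (0:ℝ) < (s:ℝ) := by exact_mod_cast hs
          have : (0:ℝ) < (k:ℝ) := by exact_mod_cast hk
          positivity
        have hρle : (s:ℝ) * k / n ≤ 1 := by
          rw [div_le_one hn0]
          exact_mod_cast hsk.le
        have key : ((s:ℝ)^c * ((n-c).choose (k-c) : ℕ)) ≤
            (n.choose k : ℝ) * ((s:ℝ) * k / n) ^ c := by
          have hNc : (0:ℝ) < (n.choose c : ℝ) := by
            exact_mod_cast Nat.choose_pos (hck.trans hkn)
          have E : (n.choose k : ℝ) * (k.choose c : ℕ) =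
              (n.choose c : ℕ) * ((n-c).choose (k-c) : ℕ) := by
            exact_mod_cast Nat.choose_mul hck
          have hpow : ((k.choose c : ℕ) : ℝ) * (n:ℝ)^c ≤ ((n.choose c : ℕ) : ℝ) * (k:ℝ)^c := by
            exact_mod_cast myChoose_pow_ineq hkn c
          have main : ((s:ℝ)^c * ((n-c).choose (k-c) : ℕ) * (n:ℝ)^c) * (n.choose c : ℕ)
              ≤ ((n.choose k : ℝ) * ((s:ℝ)*k)^c) * (n.choose c : ℕ) := by
            calc ((s:ℝ)^c * ((n-c).choose (k-c) : ℕ) * (n:ℝ)^c) * (n.choose c : ℕ)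
                = ((s:ℝ)^c * (n.choose k : ℕ)) * (((k.choose c : ℕ):ℝ) * (n:ℝ)^c) := by
                  linear_combination (-(s:ℝ)^c * (n:ℝ)^c) * E
              _ ≤ ((s:ℝ)^c * (n.choose k : ℕ)) * (((n.choose c : ℕ):ℝ) * (k:ℝ)^c) := by
                  apply mul_le_mul_of_nonneg_left hpow (by positivity)
              _ = ((n.choose k : ℝ) * ((s:ℝ)*k)^c) * (n.choose c : ℕ) := by
                  rw [mul_pow]; ring
          have main2 : (s:ℝ)^c * ((n-c).choose (k-c) : ℕ) * (n:ℝ)^c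
              ≤ (n.choose k : ℝ) * ((s:ℝ)*k)^c :=
            le_of_mul_le_mul_right main hNc
          rw [div_pow, ← mul_div_assoc]
          rw [le_div_iff₀ (by positivity)]
          exact main2
        calc ((ZR k (cnfEval C) R \ ZR k (dnfEval D) R).card : ℝ)
            ≤ ((s^c * (n-c).choose (k-c) : ℕ) : ℝ) := by exact_mod_cast hcount
          _ = (s:ℝ)^c * ((n-c).choose (k-c) : ℕ) := by push_cast; ring
          _ ≤ (n.choose k : ℝ) * ((s:ℝ) * k / n) ^ c := key
          _ = (n.choose k : ℝ) * ((s:ℝ) * k / n) ^ ((c : ℕ) : ℝ) := by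
              rw [Real.rpow_natCast]
          _ ≤ (n.choose k : ℝ) * ((s:ℝ) * k / n) ^ ε := by
              apply mul_le_mul_of_nonneg_left _ (by positivity)
              exact Real.rpow_le_rpow_of_exponent_ge hρpos hρle hce
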